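/- Let (R, α) be a multiplicative Hom-Lie conformal superalgebra with α surjective and Z(R) = 0. Then QC(R) is a Hom-Lie conformal superalgebra with respect to the commutator bracket (i.e., QC(R) is closed under the commutator) if and only if [QC(R)_λ QC(R)] = 0, i.e., [D₁_μ D₂] = 0 for all D₁, D₂ ∈ QC(R). -/

import Mathlib

noncomputable section

namespace HLCS

open scoped BigOperators

/-- Evaluation at `l : ℂ` of a polynomial (in `λ`) with coefficients in `M`,
encoded as a finitely supported family of coefficients. -/
def pev {M : Type} [AddCommGroup M] [Module ℂ M] (l : ℂ) (p : ℕ →₀ M) : M :=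
  p.sum fun n r => l ^ n • r

/-- Evaluation of a polynomial with coefficients in `M` at an operator `T`
(used for substitutions such as `-λ - ∂`). -/
def pevOp {M : Type} [AddCommGroup M] [Module ℂ M] (T : Module.End ℂ M) (p : ℕ →₀ M) : M :=
  p.sum fun n r => (T ^ n) r

/-- The super sign `(-1)^{|a||b|}` attached to parities `i`, `j`. -/
def sg (i j : ZMod 2) : ℂ := (-1 : ℂ) ^ (i * j).val

/-- The data of a `ℤ₂`-graded `ℂ[∂]`-module `R` with an endomorphism `α` and a
`ℂ`-bilinear `λ`-bracket with values in `ℂ[λ] ⊗ R` (encoded by its coefficients). -/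
structure Data (R : Type) [AddCommGroup R] [Module ℂ R] where
  der : Module.End ℂ R
  alpha : Module.End ℂ R
  G : ZMod 2 → Submodule ℂ R
  br : R →ₗ[ℂ] R →ₗ[ℂ] (ℕ →₀ R)

namespace Data

variable {R : Type} [AddCommGroup R] [Module ℂ R] (S : Data R)

/-- `[a_λ b]` evaluated at `λ = l`. -/
def lb (l : ℂ) (a b : R) : R := pev l (S.br a b)

/-- `[a_{-l-∂} b]` : the bracket with `-l - ∂` substituted for `λ`. -/
def lbOp (l : ℂ) (a b : R) : R :=
  pevOp ((-l) • (1 : Module.End ℂ R) - S.der) (S.br a b)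

/-- Multiplicativity: `α [a_λ b] = [α(a)_λ α(b)]`. -/
def Mult : Prop := ∀ (l : ℂ) (a b : R), S.alpha (S.lb l a b) = S.lb l (S.alpha a) (S.alpha b)

end Data

variable {R : Type} [AddCommGroup R] [Module ℂ R]

/-- `(R, α)` with the given data is a Hom-Lie conformal superalgebra.
All polynomial identities in `λ, μ` are stated by evaluating at arbitrary
complex numbers (which is equivalent, `ℂ` being infinite). -/
structure IsHLCS (S : Data R) : Prop where
  internal : DirectSum.IsInternal S.G
  der_even : ∀ i, ∀ a ∈ S.G i, S.der a ∈ S.G i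
  alpha_even : ∀ i, ∀ a ∈ S.G i, S.alpha a ∈ S.G i
  alpha_der : ∀ a, S.alpha (S.der a) = S.der (S.alpha a)
  br_grade : ∀ i j, ∀ a ∈ S.G i, ∀ b ∈ S.G j, ∀ n, S.br a b n ∈ S.G (i + j)
  conf_left : ∀ (l : ℂ) (a b : R), S.lb l (S.der a) b = -l • S.lb l a b
  conf_right : ∀ (l : ℂ) (a b : R), S.lb l a (S.der b) = S.der (S.lb l a b) + l • S.lb l a b
  skew : ∀ i j, ∀ a ∈ S.G i, ∀ b ∈ S.G j, ∀ l : ℂ,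
    S.lb l a b = (-sg i j) • S.lbOp l b a
  jacobi : ∀ i j, ∀ a ∈ S.G i, ∀ b ∈ S.G j, ∀ (c : R) (l m : ℂ),
    S.lb l (S.alpha a) (S.lb m b c) =
      S.lb (l + m) (S.lb l a b) (S.alpha c) + sg i j • S.lb m (S.alpha b) (S.lb l a c)

end HLCS
namespace HLCS

variable {R : Type} [AddCommGroup R] [Module ℂ R]

/-- A homogeneous conformal linear map of parity `d` on `R`, encoded as the family of
its evaluations `F l : R → R` (`l : ℂ`): it is `ℂ`-linear, polynomial in `l`, and
satisfies `F_λ(∂a) = (∂ + λ) F_λ(a)`. -/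
structure IsConfMap (S : Data R) (d : ZMod 2) (F : ℂ → R → R) : Prop where
  map_add : ∀ (l : ℂ) (a b : R), F l (a + b) = F l a + F l b
  map_smul : ∀ (l c : ℂ) (a : R), F l (c • a) = c • F l a
  poly : ∀ a : R, ∃ p : ℕ →₀ R, ∀ l : ℂ, F l a = pev l p
  conf : ∀ (l : ℂ) (a : R), F l (S.der a) = S.der (F l a) + l • F l a
  grade : ∀ i, ∀ a ∈ S.G i, ∀ l : ℂ, F l a ∈ S.G (i + d)

/-- Membership in `Ω`: a homogeneous conformal linear map commuting with `α`. -/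
def InOmega (S : Data R) (d : ZMod 2) (F : ℂ → R → R) : Prop :=
  IsConfMap S d F ∧ ∀ (l : ℂ) (a : R), F l (S.alpha a) = S.alpha (F l a)

/-- An `α^k`-derivation of parity `d`. -/
def IsDer (S : Data R) (k : ℕ) (d : ZMod 2) (F : ℂ → R → R) : Prop :=
  InOmega S d F ∧ ∀ i, ∀ a ∈ S.G i, ∀ (b : R) (l m : ℂ),
    F l (S.lb m a b) =
      S.lb (l + m) (F l a) ((S.alpha ^ k) b) +
        ((-1 : ℂ) ^ ((i * d).val)) • S.lb m ((S.alpha ^ k) a) (F l b)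

/-- The commutator `[D_λ D']_μ (a) = D_λ(D'_{μ-λ}(a)) - (-1)^{|D||D'|} D'_{μ-λ}(D_λ(a))`,
with `e = (-1)^{|D||D'|}`; first argument `l` is `λ`, second `m` is `μ`. -/
def brkt (e : ℂ) (F G : ℂ → R → R) : ℂ → ℂ → R → R :=
  fun l m a => F l (G (m - l) a) - e • G (m - l) (F l a)

/-- The twist `α'(D) = D ∘ α`. -/
def tw (S : Data R) (F : ℂ → R → R) : ℂ → R → R := fun l a => F l (S.alpha a)

/-- A generalized `α^k`-derivation of parity `d`. -/
def IsGDer (S : Data R) (k : ℕ) (d : ZMod 2) (F : ℂ → R → R) : Prop :=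
  InOmega S d F ∧ ∃ F' F'' : ℂ → R → R, InOmega S d F' ∧ InOmega S d F'' ∧
    ∀ i, ∀ a ∈ S.G i, ∀ (b : R) (l m : ℂ),
      S.lb (l + m) (F m a) ((S.alpha ^ k) b) +
        ((-1 : ℂ) ^ ((d * i).val)) • S.lb l ((S.alpha ^ k) a) (F' m b) = F'' m (S.lb l a b)

/-- An `α^k`-quasiderivation of parity `d`. -/
def IsQDer (S : Data R) (k : ℕ) (d : ZMod 2) (F : ℂ → R → R) : Prop :=
  InOmega S d F ∧ ∃ F' : ℂ → R → R, InOmega S d F' ∧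
    ∀ i, ∀ a ∈ S.G i, ∀ (b : R) (l m : ℂ),
      S.lb (l + m) (F m a) ((S.alpha ^ k) b) +
        ((-1 : ℂ) ^ ((d * i).val)) • S.lb l ((S.alpha ^ k) a) (F m b) = F' m (S.lb l a b)

/-- An `α^k`-centroid of parity `d`. -/
def IsCent (S : Data R) (k : ℕ) (d : ZMod 2) (F : ℂ → R → R) : Prop :=
  InOmega S d F ∧ ∀ i, ∀ a ∈ S.G i, ∀ (b : R) (l m : ℂ),
    S.lb (l + m) (F m a) ((S.alpha ^ k) b) =
      ((-1 : ℂ) ^ ((d * i).val)) • S.lb l ((S.alpha ^ k) a) (F m b) ∧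
    S.lb (l + m) (F m a) ((S.alpha ^ k) b) = F m (S.lb l a b)

/-- An `α^k`-quasicentroid of parity `d`. -/
def IsQC (S : Data R) (k : ℕ) (d : ZMod 2) (F : ℂ → R → R) : Prop :=
  InOmega S d F ∧ ∀ i, ∀ a ∈ S.G i, ∀ (b : R) (l m : ℂ),
    S.lb (l + m) (F m a) ((S.alpha ^ k) b) =
      ((-1 : ℂ) ^ ((d * i).val)) • S.lb l ((S.alpha ^ k) a) (F m b)

/-- An `α^k`-central derivation of parity `d`. -/
def IsZDer (S : Data R) (k : ℕ) (d : ZMod 2) (F : ℂ → R → R) : Prop :=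
  InOmega S d F ∧ ∀ (a b : R) (l m : ℂ),
    S.lb (l + m) (F m a) ((S.alpha ^ k) b) = 0 ∧ F m (S.lb l a b) = 0

/-- Membership in the center `Z(R)`. -/
def IsCentral (S : Data R) (x : R) : Prop := ∀ (l : ℂ) (y : R), S.lb l x y = 0

end HLCS
namespace HLCS

variable {R : Type} [AddCommGroup R] [Module ℂ R]

section Aux

variable {R : Type} [AddCommGroup R] [Module ℂ R]

lemma pev_zero (l : ℂ) : pev l (0 : ℕ →₀ R) = 0 := Finsupp.sum_zero_index

lemma pev_add (l : ℂ) (p q : ℕ →₀ R) : pev l (p + q) = pev l p + pev l q :=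
  Finsupp.sum_add_index' (fun _ => smul_zero _) (fun _ _ _ => smul_add _ _ _)

lemma pev_smul (l c : ℂ) (p : ℕ →₀ R) : pev l (c • p) = c • pev l p := by
  unfold pev
  rw [Finsupp.sum_smul_index' (fun _ => smul_zero _), Finsupp.smul_sum]
  exact Finsupp.sum_congr fun n _ => smul_comm _ _ _

lemma pev_sub (l : ℂ) (p q : ℕ →₀ R) : pev l (p - q) = pev l p - pev l q := by
  have : p - q = p + (-1 : ℂ) • q := by rw [neg_one_smul]; abel
  rw [this, pev_add, pev_smul, neg_one_smul]; abel

variable (S : Data R)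

lemma lb_zero_left (l : ℂ) (b : R) : S.lb l 0 b = 0 := by
  simp [Data.lb, pev_zero]

lemma lb_zero_right (l : ℂ) (a : R) : S.lb l a 0 = 0 := by
  simp [Data.lb, pev_zero]

lemma lb_smul_left (l c : ℂ) (a b : R) : S.lb l (c • a) b = c • S.lb l a b := by
  simp [Data.lb, pev_smul]

lemma lb_smul_right (l c : ℂ) (a b : R) : S.lb l a (c • b) = c • S.lb l a b := by
  simp [Data.lb, pev_smul]

lemma lb_sub_left (l : ℂ) (a a' b : R) :
    S.lb l (a - a') b = S.lb l a b - S.lb l a' b := by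
  simp [Data.lb, pev_sub]

lemma lb_sub_right (l : ℂ) (a b b' : R) :
    S.lb l a (b - b') = S.lb l a b - S.lb l a b' := by
  simp [Data.lb, pev_sub]

lemma comm_pow {F : ℂ → R → R} (h : ∀ (l : ℂ) (a : R), F l (S.alpha a) = S.alpha (F l a))
    (n : ℕ) (l : ℂ) (a : R) : F l ((S.alpha ^ n) a) = (S.alpha ^ n) (F l a) := by
  induction n generalizing a with
  | zero => simp
  | succ n ih =>
      rw [pow_succ, Module.End.mul_apply, ih, h, Module.End.mul_apply]

lemma grade_pow (hS : IsHLCS S) (i : ZMod 2) {a : R} (ha : a ∈ S.G i) (n : ℕ) :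
    (S.alpha ^ n) a ∈ S.G i := by
  induction n with
  | zero => simpa using ha
  | succ n ih =>
      rw [pow_succ']
      exact hS.alpha_even i _ ih

lemma surj_pow (hsurj : Function.Surjective S.alpha) (n : ℕ) :
    Function.Surjective ⇑(S.alpha ^ n) := by
  induction n with
  | zero => simpa [Module.End.one_eq_id] using Function.surjective_id
  | succ n ih =>
      intro y
      obtain ⟨z, hz⟩ := ih y
      obtain ⟨w, hw⟩ := hsurj z
      exact ⟨w, by rw [pow_succ, Module.End.mul_apply, hw, hz]⟩

lemma pow_add_apply (k s : ℕ) (b : R) :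
    (S.alpha ^ (k + s)) b = (S.alpha ^ k) ((S.alpha ^ s) b) := by
  rw [pow_add, Module.End.mul_apply]

lemma pow_add_apply' (k s : ℕ) (b : R) :
    (S.alpha ^ (k + s)) b = (S.alpha ^ s) ((S.alpha ^ k) b) := by
  rw [add_comm, pow_add, Module.End.mul_apply]

lemma sign1 (d d' i : ZMod 2) :
    ((-1:ℂ))^((d*(i+d')).val) * (-1)^((d'*i).val)
      = ((-1:ℂ))^(((d+d')*i).val) * (-1)^((d*d').val) := by
  have h01 : ∀ x : ZMod 2, x = 0 ∨ x = 1 := by decide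
  rcases h01 d with rfl | rfl <;> rcases h01 d' with rfl | rfl <;> rcases h01 i with rfl | rfl <;>
    norm_num [show (1 + 1 : ZMod 2) = 0 from rfl, show ZMod.val (1:ZMod 2) = 1 from rfl]

lemma sign2 (d d' i : ZMod 2) :
    (-1:ℂ)^((d*d').val) * ((-1:ℂ)^((d'*(i+d)).val) * (-1:ℂ)^((d*i).val))
      = (-1:ℂ)^(((d+d')*i).val) := by
  have h01 : ∀ x : ZMod 2, x = 0 ∨ x = 1 := by decide
  rcases h01 d with rfl | rfl <;> rcases h01 d' with rfl | rfl <;> rcases h01 i with rfl | rfl <;>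
    norm_num [show (1 + 1 : ZMod 2) = 0 from rfl, show ZMod.val (1:ZMod 2) = 1 from rfl]

lemma isQC_zero (S : Data R) (k : ℕ) (d : ZMod 2) :
    IsQC S k d (fun _ _ => (0 : R)) := by
  refine ⟨⟨⟨?_, ?_, ?_, ?_, ?_⟩, ?_⟩, ?_⟩
  · intro l a b; simp
  · intro l c a; simp
  · intro a; exact ⟨0, fun l => (pev_zero l).symm⟩
  · intro l a; simp
  · intro i a _ l; exact zero_mem _
  · intro l a; simp
  · intro i a _ b l m; rw [lb_zero_left, lb_zero_right, smul_zero]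

end Aux

/-- Let `(R, α)` be a multiplicative Hom-Lie conformal superalgebra
with `α` surjective and `Z(R) = 0`.  Then `QC(R)` is closed under the commutator
bracket (i.e. it is a Hom-Lie conformal superalgebra for this bracket) if and only
if `[QC(R)_λ QC(R)] = 0`. -/
theorem qc_homLie_iff_trivial (S : Data R) (hS : IsHLCS S) (hmult : S.Mult)
    (hsurj : Function.Surjective S.alpha)
    (hZ : ∀ x : R, IsCentral S x → x = 0) :
    (∀ (k s : ℕ) (d d' : ZMod 2) (F G : ℂ → R → R),
        IsQC S k d F → IsQC S s d' G →
          ∀ l : ℂ, IsQC S (k + s) (d + d') (brkt ((-1 : ℂ) ^ ((d * d').val)) F G l)) ↔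
      (∀ (k s : ℕ) (d d' : ZMod 2) (F G : ℂ → R → R),
        IsQC S k d F → IsQC S s d' G →
          ∀ (l m : ℂ) (a : R), brkt ((-1 : ℂ) ^ ((d * d').val)) F G l m a = 0) := by
  constructor
  · -- closure under bracket implies triviality
    intro h k s d d' F G hF hG l m a
    have key : ∀ i : ZMod 2, ∀ x ∈ S.G i,
        brkt ((-1 : ℂ) ^ ((d * d').val)) F G l m x = 0 := by
      intro i a ha
      apply hZ
      have main : ∀ (l' : ℂ) (b : R),
          S.lb (l' + m) (brkt ((-1 : ℂ) ^ ((d * d').val)) F G l m a)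
            ((S.alpha ^ (k + s)) b) = 0 := by
        intro l' b
        have T1 : S.lb (l' + m) (F l (G (m - l) a)) ((S.alpha ^ (k + s)) b)
            = ((-1:ℂ)^((d*(i+d')).val) * (-1:ℂ)^((d'*i).val)) •
                S.lb l' ((S.alpha ^ (k + s)) a) (G (m - l) (F l b)) := by
          rw [pow_add_apply S k s b, show l' + m = (l' + m - l) + l by ring,
            hF.2 (i + d') (G (m - l) a) (hG.1.1.grade i a ha (m - l)) ((S.alpha ^ s) b)
              (l' + m - l) l,
            comm_pow S hF.1.2 s l b, ← comm_pow S hG.1.2 k (m - l) a,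
            show l' + m - l = l' + (m - l) by ring,
            hG.2 i ((S.alpha ^ k) a) (grade_pow S hS i ha k) (F l b) l' (m - l),
            ← pow_add_apply' S k s a, smul_smul]
        have T2 : S.lb (l' + m) (G (m - l) (F l a)) ((S.alpha ^ (k + s)) b)
            = ((-1:ℂ)^((d'*(i+d)).val) * (-1:ℂ)^((d*i).val)) •
                S.lb l' ((S.alpha ^ (k + s)) a) (F l (G (m - l) b)) := by
          rw [pow_add_apply' S k s b, show l' + m = (l' + l) + (m - l) by ring,
            hG.2 (i + d) (F l a) (hF.1.1.grade i a ha l) ((S.alpha ^ k) b) (l' + l) (m - l),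
            comm_pow S hG.1.2 k (m - l) b, ← comm_pow S hF.1.2 s l a,
            hF.2 i ((S.alpha ^ s) a) (grade_pow S hS i ha s) (G (m - l) b) l' l,
            ← pow_add_apply S k s a, smul_smul]
        have hbra : brkt ((-1 : ℂ) ^ ((d * d').val)) F G l m a
            = F l (G (m - l) a) - ((-1 : ℂ) ^ ((d * d').val)) • G (m - l) (F l a) := rfl
        have hbrb : brkt ((-1 : ℂ) ^ ((d * d').val)) F G l m b
            = F l (G (m - l) b) - ((-1 : ℂ) ^ ((d * d').val)) • G (m - l) (F l b) := rfl
        have hL : S.lb (l' + m) (brkt ((-1 : ℂ) ^ ((d * d').val)) F G l m a)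
              ((S.alpha ^ (k + s)) b)
            = ((-1:ℂ)^(((d+d')*i).val) * (-1:ℂ)^((d*d').val)) •
                S.lb l' ((S.alpha ^ (k + s)) a) (G (m - l) (F l b))
              - ((-1:ℂ)^(((d+d')*i).val)) •
                S.lb l' ((S.alpha ^ (k + s)) a) (F l (G (m - l) b)) := by
          rw [hbra, lb_sub_left, lb_smul_left, T1, T2, smul_smul, sign1 d d' i,
            sign2 d d' i]
        have hR : S.lb (l' + m) (brkt ((-1 : ℂ) ^ ((d * d').val)) F G l m a)
              ((S.alpha ^ (k + s)) b)
            = ((-1:ℂ)^(((d+d')*i).val)) •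
                S.lb l' ((S.alpha ^ (k + s)) a) (F l (G (m - l) b))
              - ((-1:ℂ)^(((d+d')*i).val) * (-1:ℂ)^((d*d').val)) •
                S.lb l' ((S.alpha ^ (k + s)) a) (G (m - l) (F l b)) := by
          rw [(h k s d d' F G hF hG l).2 i a ha b l' m, hbrb, lb_sub_right,
            lb_smul_right, smul_sub, smul_smul]
        have h2 : (2:ℂ) • S.lb (l' + m) (brkt ((-1 : ℂ) ^ ((d * d').val)) F G l m a)
            ((S.alpha ^ (k + s)) b) = 0 := by
          rw [two_smul]
          nth_rewrite 1 [hL]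
          rw [hR]; abel
        have := smul_eq_zero.mp h2
        rcases this with h' | h'
        · exact absurd h' (by norm_num)
        · exact h'
      intro p y
      obtain ⟨b, rfl⟩ := surj_pow S hsurj (k + s) y
      rw [show p = (p - m) + m by ring]
      exact main (p - m) b
    have htop : a ∈ ⨆ i, S.G i := by
      rw [hS.internal.submodule_iSup_eq_top]; trivial
    have hF0 : F l (0 : R) = 0 := by
      have := hF.1.1.map_smul l 0 0; simpa using this
    have hG0 : G (m - l) (0 : R) = 0 := by
      have := hG.1.1.map_smul (m - l) 0 0; simpa using this
    refine Submodule.iSup_induction (motive := fun x =>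
        brkt ((-1 : ℂ) ^ ((d * d').val)) F G l m x = 0) S.G htop key ?_ ?_
    · show F l (G (m - l) 0) - ((-1 : ℂ) ^ ((d * d').val)) • G (m - l) (F l 0) = 0
      rw [hF0, hG0, hF0, smul_zero, sub_zero]
    · intro x y hx hy
      have hx' : F l (G (m - l) x) - ((-1 : ℂ) ^ ((d * d').val)) • G (m - l) (F l x) = 0 := hx
      have hy' : F l (G (m - l) y) - ((-1 : ℂ) ^ ((d * d').val)) • G (m - l) (F l y) = 0 := hy
      show F l (G (m - l) (x + y)) - ((-1 : ℂ) ^ ((d * d').val)) • G (m - l) (F l (x + y)) = 0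
      rw [hG.1.1.map_add, hF.1.1.map_add, hF.1.1.map_add, hG.1.1.map_add, smul_add]
      calc F l (G (m - l) x) + F l (G (m - l) y) -
            (((-1 : ℂ) ^ ((d * d').val)) • G (m - l) (F l x) +
              ((-1 : ℂ) ^ ((d * d').val)) • G (m - l) (F l y))
          = (F l (G (m - l) x) - ((-1 : ℂ) ^ ((d * d').val)) • G (m - l) (F l x)) +
            (F l (G (m - l) y) - ((-1 : ℂ) ^ ((d * d').val)) • G (m - l) (F l y)) := by abel
        _ = 0 := by rw [hx', hy', add_zero]
  · -- triviality implies closure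
    intro h k s d d' F G hF hG l
    have hfun : brkt ((-1 : ℂ) ^ ((d * d').val)) F G l = fun _ _ => (0 : R) := by
      funext m a; exact h k s d d' F G hF hG l m a
    rw [hfun]
    exact isQC_zero S (k + s) (d + d')

end HLCS
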